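/- For every integer d ≥ 1 and every real x with 0 ≤ x ≤ 1/d, one has 1 − (1 − (d/(2d−1))·x)^{d+1} ≥ (d·(d+1)/(2·(2d−1)))·x. -/

import Mathlib

lemma bernoulli_quad_aux (n : ℕ) : ∀ y : ℝ, 0 ≤ y → y ≤ 1 →
    (1 - y) ^ n ≤ 1 - (n : ℝ) * y + (n : ℝ) * ((n : ℝ) - 1) / 2 * y ^ 2 := by
  induction n with
  | zero => intro y _ _; simp
  | succ n ih =>
    intro y hy0 hy1
    have h := ih y hy0 hy1
    have h1 : (0:ℝ) ≤ 1 - y := by linarith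
    have hp : (1 - y) ^ (n+1) = (1 - y) ^ n * (1 - y) := pow_succ _ _
    rcases Nat.eq_zero_or_pos n with rfl | hpos
    · push_cast; nlinarith [sq_nonneg y]
    · have hn1 : (1:ℝ) ≤ (n:ℝ) := by exact_mod_cast hpos
      have hc : (0:ℝ) ≤ (n:ℝ) * ((n:ℝ) - 1) / 2 :=
        div_nonneg (mul_nonneg (by linarith) (by linarith)) (by norm_num)
      have hcube : (0:ℝ) ≤ (n:ℝ) * ((n:ℝ) - 1) / 2 * (y * y * y) :=
        mul_nonneg hc (mul_nonneg (mul_nonneg hy0 hy0) hy0)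
      push_cast
      rw [hp]
      nlinarith [mul_le_mul_of_nonneg_right h h1, hcube]

/-- For every integer `d ≥ 1` and real `0 ≤ x ≤ 1/d`,
`1 - (1 - (d/(2d-1))·x)^(d+1) ≥ (d(d+1)/(2(2d-1)))·x`. -/
theorem subsampling_trigger_lower_bound (d : ℕ) (hd : 1 ≤ d) (x : ℝ)
    (hx0 : 0 ≤ x) (hx1 : x ≤ 1 / (d : ℝ)) :
    1 - (1 - ((d : ℝ) / (2 * (d : ℝ) - 1)) * x) ^ (d + 1) ≥
      ((d : ℝ) * ((d : ℝ) + 1) / (2 * (2 * (d : ℝ) - 1))) * x := by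
  have hd1 : (1:ℝ) ≤ (d:ℝ) := by exact_mod_cast hd
  have hden : (0:ℝ) < 2 * (d:ℝ) - 1 := by linarith
  set y : ℝ := (d : ℝ) / (2 * (d : ℝ) - 1) * x with hy
  have hdx : (d:ℝ) * x ≤ 1 := by
    rw [div_eq_inv_mul] at hx1
    calc (d:ℝ) * x ≤ (d:ℝ) * ((d:ℝ)⁻¹ * 1) := by
          apply mul_le_mul_of_nonneg_left _ (by linarith)
          simpa using hx1
      _ = 1 := by field_simp
  have hy0 : 0 ≤ y := mul_nonneg (div_nonneg (by linarith) hden.le) hx0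
  have hyd : (2 * (d:ℝ) - 1) * y = (d:ℝ) * x := by
    rw [hy]; field_simp [hden.ne']
  have hy1 : y ≤ 1 := by nlinarith
  have h := bernoulli_quad_aux (d + 1) y hy0 hy1
  push_cast at h
  have key : 1 - (1 - y) ^ (d + 1) ≥ ((d:ℝ) + 1) / 2 * y := by
    nlinarith [mul_nonneg hy0 (sub_nonneg.mpr (by nlinarith : (d:ℝ) * y ≤ 1)), sq_nonneg y]
  have hrhs : ((d : ℝ) * ((d : ℝ) + 1) / (2 * (2 * (d : ℝ) - 1))) * x
      = ((d:ℝ) + 1) / 2 * y := by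
    field_simp [hy]; ring
  rw [hrhs]; exact key
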